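/- Young-type inequality for shifted Orlicz functions: let φ satisfy condition (C3). Then for every δ > 0 there exists a constant c_δ > 0, depending only on δ and the characteristics of φ, such that for all α ≥ 0 and all r, s ≥ 0: φ_α'(r) · s ≤ c_δ · φ_α(r) + δ · φ_α(s), where φ_α'(r) = φ'(α + r)·r/(α + r). -/

import Mathlib

open RealInnerProductSpace

/-- The shifted Orlicz function `φ_α(t) = ∫₀^t φ'(α+s) s/(α+s) ds`, expressed in
terms of the derivative `φ'` of `φ`. -/
noncomputable def phiShift (φ' : ℝ → ℝ) (α t : ℝ) : ℝ :=
  ∫ s in (0:ℝ)..t, φ' (α + s) * s / (α + s)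

open Classical in
/-- The Orlicz operator `A(a) = (φ'(|a|)/|a|) a` (with `A(0) = 0`). -/
noncomputable def opA (φ' : ℝ → ℝ) {d : ℕ} (a : EuclideanSpace ℝ (Fin d)) :
    EuclideanSpace ℝ (Fin d) :=
  if a = 0 then 0 else (φ' ‖a‖ / ‖a‖) • a

/-- The convex conjugate `φ*(r) = sup_{s ≥ 0} (rs − φ(s))`. -/
noncomputable def orliczConj (φ : ℝ → ℝ) (r : ℝ) : ℝ :=
  sSup ((fun s => r * s - φ s) '' Set.Ici 0)

/-- If `p φ'(s) ≤ φ''(s) s` on `(0,∞)`, then `φ'(s) s^{-p}` is nondecreasing. -/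
lemma phiShift_aux_mono (φ' φ'' : ℝ → ℝ) (p : ℝ)
    (hd2 : ∀ s ∈ Set.Ioi (0:ℝ), HasDerivAt φ' (φ'' s) s)
    (hge : ∀ s ∈ Set.Ioi (0:ℝ), p * φ' s ≤ φ'' s * s) :
    MonotoneOn (fun s => φ' s * s ^ (-p)) (Set.Ioi (0:ℝ)) := by
  have hder : ∀ x ∈ Set.Ioi (0:ℝ), HasDerivAt (fun s => φ' s * s ^ (-p))
      (φ'' x * x ^ (-p) + φ' x * (-p * x ^ (-p - 1))) x := by
    intro x hx
    exact (hd2 x hx).mul (Real.hasDerivAt_rpow_const (Or.inl (ne_of_gt hx)))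
  refine monotoneOn_of_deriv_nonneg (convex_Ioi 0)
    (fun x hx => (hder x hx).continuousAt.continuousWithinAt) ?_ ?_
  · rw [interior_Ioi]
    exact fun x hx => (hder x hx).differentiableAt.differentiableWithinAt
  · rw [interior_Ioi]
    intro x hx
    rw [(hder x hx).deriv]
    have hx0 : (0:ℝ) < x := hx
    have hp := hge x hx
    have hxp : x ^ (-p - 1) * x = x ^ (-p) := by
      rw [← Real.rpow_add_one hx0.ne' (-p - 1)]
      congr 1
      ring
    rw [← hxp]
    have h1 : (0:ℝ) ≤ x ^ (-p - 1) := Real.rpow_nonneg hx0.le _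
    have h2 : (0:ℝ) ≤ φ'' x * x - p * φ' x := sub_nonneg.2 hp
    nlinarith [mul_nonneg h1 h2]

/-- If `φ''(s) s ≤ P φ'(s)` on `(0,∞)`, then `φ'(s) s^{-P}` is nonincreasing. -/
lemma phiShift_aux_anti (φ' φ'' : ℝ → ℝ) (P : ℝ)
    (hd2 : ∀ s ∈ Set.Ioi (0:ℝ), HasDerivAt φ' (φ'' s) s)
    (hle : ∀ s ∈ Set.Ioi (0:ℝ), φ'' s * s ≤ P * φ' s) :
    AntitoneOn (fun s => φ' s * s ^ (-P)) (Set.Ioi (0:ℝ)) := by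
  have hder : ∀ x ∈ Set.Ioi (0:ℝ), HasDerivAt (fun s => φ' s * s ^ (-P))
      (φ'' x * x ^ (-P) + φ' x * (-P * x ^ (-P - 1))) x := by
    intro x hx
    exact (hd2 x hx).mul (Real.hasDerivAt_rpow_const (Or.inl (ne_of_gt hx)))
  refine antitoneOn_of_deriv_nonpos (convex_Ioi 0)
    (fun x hx => (hder x hx).continuousAt.continuousWithinAt) ?_ ?_
  · rw [interior_Ioi]
    exact fun x hx => (hder x hx).differentiableAt.differentiableWithinAt
  · rw [interior_Ioi]
    intro x hx
    rw [(hder x hx).deriv]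
    have hx0 : (0:ℝ) < x := hx
    have hp := hle x hx
    have hxp : x ^ (-P - 1) * x = x ^ (-P) := by
      rw [← Real.rpow_add_one hx0.ne' (-P - 1)]
      congr 1
      ring
    rw [← hxp]
    have h1 : (0:ℝ) ≤ x ^ (-P - 1) := Real.rpow_nonneg hx0.le _
    have h2 : (0:ℝ) ≤ P * φ' x - φ'' x * x := sub_nonneg.2 hp
    nlinarith [mul_nonneg h1 h2]

/-- Elementary rpow inequality: for `1 ≤ q ≤ M` and `0 ≤ c ≤ 1`,
`M^c q ≤ q^c M`. -/
lemma phiShift_aux_qlem (q M c : ℝ) (hq : 1 ≤ q) (hqM : q ≤ M) (hc0 : 0 ≤ c)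
    (hc1 : c ≤ 1) : M ^ c * q ≤ q ^ c * M := by
  have hq0 : (0:ℝ) < q := lt_of_lt_of_le one_pos hq
  have hM0 : (0:ℝ) < M := lt_of_lt_of_le hq0 hqM
  have hqsplit : q = q ^ c * q ^ (1 - c) := by
    rw [← Real.rpow_add hq0]; norm_num
  have hMsplit : M = M ^ c * M ^ (1 - c) := by
    rw [← Real.rpow_add hM0]; norm_num
  have hle : q ^ (1 - c) ≤ M ^ (1 - c) :=
    Real.rpow_le_rpow hq0.le hqM (by linarith)
  calc M ^ c * q = M ^ c * (q ^ c * q ^ (1 - c)) := by rw [← hqsplit]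
    _ ≤ M ^ c * (q ^ c * M ^ (1 - c)) := by
        have h1 : (0:ℝ) ≤ M ^ c := Real.rpow_nonneg hM0.le _
        have h2 : (0:ℝ) ≤ q ^ c := Real.rpow_nonneg hq0.le _
        nlinarith [mul_le_mul_of_nonneg_left hle h2]
    _ = q ^ c * (M ^ c * M ^ (1 - c)) := by ring
    _ = q ^ c * M := by rw [← hMsplit]

set_option maxHeartbeats 1000000 in
theorem stmt15 (φ φ' φ'' : ℝ → ℝ) (c₀ C₀ : ℝ)
    (hc₀ : 0 < c₀) (hC₀ : 0 < C₀)
    (hcont : ContinuousOn φ (Set.Ici 0))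
    (hd1 : ∀ s ∈ Set.Ioi (0:ℝ), HasDerivAt φ (φ' s) s)
    (hd2 : ∀ s ∈ Set.Ioi (0:ℝ), HasDerivAt φ' (φ'' s) s)
    (hd2c : ContinuousOn φ'' (Set.Ioi 0))
    (hconv : ConvexOn ℝ (Set.Ioi 0) φ)
    (hpos : ∀ s ∈ Set.Ioi (0:ℝ), 0 < φ s)
    (hφ0 : φ 0 = 0)
    (hlim0 : Filter.Tendsto (fun s => φ s / s) (nhdsWithin 0 (Set.Ioi 0)) (nhds 0))
    (hliminfty : Filter.Tendsto (fun s => φ s / s) Filter.atTop Filter.atTop)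
    (hΔ2 : ∀ s ≥ (0:ℝ), φ (2 * s) ≤ C₀ * φ s)
    (hΔ2conj : ∀ r ≥ (0:ℝ), orliczConj φ (2 * r) ≤ C₀ * orliczConj φ r)
    (hφ'' : ∀ s ∈ Set.Ioi (0:ℝ), c₀ * φ' s ≤ φ'' s * s ∧ φ'' s * s ≤ C₀ * φ' s) :
    ∀ δ > (0:ℝ), ∃ cδ : ℝ, 0 < cδ ∧ ∀ α ≥ (0:ℝ), ∀ r ≥ (0:ℝ), ∀ s ≥ (0:ℝ),
      (φ' (α + r) * r / (α + r)) * s ≤ cδ * phiShift φ' α r + δ * phiShift φ' α s := by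
  -- nonnegativity of φ'
  have hφ'nn : ∀ u ∈ Set.Ioi (0:ℝ), 0 ≤ φ' u := by
    intro u hu
    have hu0 : (0:ℝ) < u := hu
    have hslope : ∀ x ∈ Set.Ioo (0:ℝ) u, (φ u - φ x) / (u - x) ≤ φ' u := by
      intro x hx
      have := hconv.slope_le_of_hasDerivAt hx.1 hu hx.2 (hd1 u hu)
      rwa [slope_def_field] at this
    have hφ0' : Filter.Tendsto φ (nhdsWithin 0 (Set.Ioi 0)) (nhds 0) := by
      have h := (hcont 0 Set.self_mem_Ici).tendsto
      rw [hφ0] at h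
      exact h.mono_left (nhdsWithin_mono 0 Set.Ioi_subset_Ici_self)
    have hT : Filter.Tendsto (fun x => (φ u - φ x) / (u - x))
        (nhdsWithin 0 (Set.Ioi 0)) (nhds (φ u / u)) := by
      have h1 : Filter.Tendsto (fun x => φ u - φ x) (nhdsWithin 0 (Set.Ioi 0))
          (nhds (φ u - 0)) := tendsto_const_nhds.sub hφ0'
      have h2 : Filter.Tendsto (fun x : ℝ => u - x) (nhdsWithin 0 (Set.Ioi 0))
          (nhds (u - 0)) :=
        tendsto_const_nhds.sub (Filter.tendsto_id.mono_right nhdsWithin_le_nhds)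
      have := h1.div h2 (by simpa using hu0.ne')
      rw [sub_zero, sub_zero] at this
      exact this
    have hev : ∀ᶠ x in nhdsWithin 0 (Set.Ioi 0), (φ u - φ x) / (u - x) ≤ φ' u := by
      filter_upwards [Ioo_mem_nhdsGT_of_mem ⟨le_refl (0:ℝ), hu0⟩] with x hx
      exact hslope x hx
    have hle := le_of_tendsto hT hev
    have hdiv : 0 < φ u / u := div_pos (hpos u hu) hu0
    linarith
  set c : ℝ := min c₀ 1 with hcdef
  have hc : 0 < c := lt_min hc₀ one_pos
  have hc1 : c ≤ 1 := min_le_right _ _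
  -- monotone / antitone auxiliary functions
  have hmono : MonotoneOn (fun s => φ' s * s ^ (-c)) (Set.Ioi (0:ℝ)) := by
    refine phiShift_aux_mono φ' φ'' c hd2 ?_
    intro s hs
    have := (hφ'' s hs).1
    have hnn := hφ'nn s hs
    nlinarith [min_le_left c₀ 1]
  have hanti : AntitoneOn (fun s => φ' s * s ^ (-C₀)) (Set.Ioi (0:ℝ)) :=
    phiShift_aux_anti φ' φ'' C₀ hd2 (fun s hs => (hφ'' s hs).2)
  -- growth and doubling for φ'
  have hgrow : ∀ a b : ℝ, 0 < a → a ≤ b → φ' a * (b / a) ^ c ≤ φ' b := by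
    intro a b ha hab
    have hb : 0 < b := lt_of_lt_of_le ha hab
    have h := hmono ha (show b ∈ Set.Ioi (0:ℝ) from hb) hab
    have e2 : (b / a) ^ c = b ^ c * a ^ (-c) := by
      rw [Real.rpow_neg ha.le, Real.div_rpow hb.le ha.le, div_eq_mul_inv]
    calc φ' a * (b / a) ^ c = φ' a * a ^ (-c) * b ^ c := by rw [e2]; ring
      _ ≤ φ' b * b ^ (-c) * b ^ c :=
          mul_le_mul_of_nonneg_right h (Real.rpow_nonneg hb.le c)
      _ = φ' b := by
          rw [mul_assoc, ← Real.rpow_add hb, neg_add_cancel, Real.rpow_zero, mul_one]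
  have hdbl : ∀ a b : ℝ, 0 < a → a ≤ b → φ' b ≤ φ' a * (b / a) ^ C₀ := by
    intro a b ha hab
    have hb : 0 < b := lt_of_lt_of_le ha hab
    have h := hanti ha (show b ∈ Set.Ioi (0:ℝ) from hb) hab
    have e2 : (b / a) ^ C₀ = b ^ C₀ * a ^ (-C₀) := by
      rw [Real.rpow_neg ha.le, Real.div_rpow hb.le ha.le, div_eq_mul_inv]
    calc φ' b = φ' b * b ^ (-C₀) * b ^ C₀ := by
          rw [mul_assoc, ← Real.rpow_add hb, neg_add_cancel, Real.rpow_zero, mul_one]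
      _ ≤ φ' a * a ^ (-C₀) * b ^ C₀ :=
          mul_le_mul_of_nonneg_right h (Real.rpow_nonneg hb.le C₀)
      _ = φ' a * (b / a) ^ C₀ := by rw [e2]; ring
  -- properties of the integrand f α t = φ'(α+t) t / (α+t)
  have hf_nonneg : ∀ α : ℝ, 0 ≤ α → ∀ t : ℝ, 0 ≤ t →
      0 ≤ φ' (α + t) * t / (α + t) := by
    intro α hα t ht
    rcases eq_or_lt_of_le ht with rfl | ht'
    · simp
    · have hat : 0 < α + t := by linarith
      exact div_nonneg (mul_nonneg (hφ'nn _ hat) ht) hat.le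
  have hf_mono : ∀ α : ℝ, 0 ≤ α →
      MonotoneOn (fun t => φ' (α + t) * t / (α + t)) (Set.Ici (0:ℝ)) := by
    intro α hα t1 ht1 t2 ht2 h12
    rcases eq_or_lt_of_le (Set.mem_Ici.1 ht1) with rfl | h1
    · simp only [add_zero, mul_zero, zero_div]
      exact hf_nonneg α hα t2 ht2
    · have ha1 : 0 < α + t1 := by linarith
      have ha2 : 0 < α + t2 := by linarith
      have hab : α + t1 ≤ α + t2 := by linarith
      have hφle : φ' (α + t1) ≤ φ' (α + t2) := by
        have hg := hgrow (α + t1) (α + t2) ha1 hab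
        have h1q : (1:ℝ) ≤ (α + t2) / (α + t1) := (one_le_div ha1).2 hab
        have := Real.one_le_rpow h1q hc.le
        nlinarith [hφ'nn (α + t1) ha1]
      have hratio : t1 / (α + t1) ≤ t2 / (α + t2) := by
        rw [div_le_div_iff₀ ha1 ha2]
        nlinarith
      have := mul_le_mul hφle hratio
        (div_nonneg h1.le ha1.le) (hφ'nn (α + t2) ha2)
      calc φ' (α + t1) * t1 / (α + t1) = φ' (α + t1) * (t1 / (α + t1)) := by ring
        _ ≤ φ' (α + t2) * (t2 / (α + t2)) := this
        _ = φ' (α + t2) * t2 / (α + t2) := by ring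
  have hii : ∀ α : ℝ, 0 ≤ α → ∀ x y : ℝ, 0 ≤ x → x ≤ y →
      IntervalIntegrable (fun t => φ' (α + t) * t / (α + t)) MeasureTheory.volume x y := by
    intro α hα x y hx hxy
    refine MonotoneOn.intervalIntegrable ((hf_mono α hα).mono ?_)
    rw [Set.uIcc_of_le hxy]
    exact fun z hz => le_trans hx hz.1
  have hPnn : ∀ α : ℝ, 0 ≤ α → ∀ r : ℝ, 0 ≤ r → 0 ≤ phiShift φ' α r := by
    intro α hα r hr
    exact intervalIntegral.integral_nonneg hr (fun u hu => hf_nonneg α hα u hu.1)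
  -- lower bound : (r/2) f(r/2) ≤ phiShift r
  have hlow : ∀ α : ℝ, 0 ≤ α → ∀ r : ℝ, 0 < r →
      (r / 2) * (φ' (α + r / 2) * (r / 2) / (α + r / 2)) ≤ phiShift φ' α r := by
    intro α hα r hr
    have h1 : IntervalIntegrable (fun t => φ' (α + t) * t / (α + t))
        MeasureTheory.volume 0 (r / 2) := hii α hα 0 (r / 2) le_rfl (by linarith)
    have h2 : IntervalIntegrable (fun t => φ' (α + t) * t / (α + t))
        MeasureTheory.volume (r / 2) r := hii α hα (r / 2) r (by linarith) (by linarith)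
    have hsplit := intervalIntegral.integral_add_adjacent_intervals h1 h2
    have hnn1 : 0 ≤ ∫ s in (0:ℝ)..(r / 2), φ' (α + s) * s / (α + s) :=
      intervalIntegral.integral_nonneg (by linarith) (fun u hu => hf_nonneg α hα u hu.1)
    have hmon : ∀ x ∈ Set.Icc (r / 2) r,
        φ' (α + r / 2) * (r / 2) / (α + r / 2) ≤ φ' (α + x) * x / (α + x) := by
      intro x hx
      have hx1 := hx.1
      refine hf_mono α hα ?_ ?_ hx1 <;> simp only [Set.mem_Ici] <;> linarith
    have hc2 := intervalIntegral.integral_mono_on (by linarith : r / 2 ≤ r)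
      (intervalIntegrable_const) h2 hmon
    rw [intervalIntegral.integral_const, smul_eq_mul] at hc2
    have : r - r / 2 = r / 2 := by ring
    rw [this] at hc2
    rw [phiShift, ← hsplit]
    linarith
  -- doubling bound : f(r) r ≤ 4 B phiShift r, with B = 2^C₀
  set B : ℝ := (2:ℝ) ^ C₀ with hBdef
  have hB : 0 < B := Real.rpow_pos_of_pos two_pos _
  have hE : ∀ α : ℝ, 0 ≤ α → ∀ r : ℝ, 0 < r →
      (φ' (α + r) * r / (α + r)) * r ≤ 4 * B * phiShift φ' α r := by
    intro α hα r hr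
    have ha : 0 < α + r / 2 := by linarith
    have hb : 0 < α + r := by linarith
    have hab : α + r / 2 ≤ α + r := by linarith
    have hd := hdbl (α + r / 2) (α + r) ha hab
    have hba : (α + r) / (α + r / 2) ≤ 2 := by
      rw [div_le_iff₀ ha]; linarith
    have hrp : ((α + r) / (α + r / 2)) ^ C₀ ≤ B :=
      Real.rpow_le_rpow (div_nonneg hb.le ha.le) hba hC₀.le
    have hφa := hφ'nn (α + r / 2) ha
    have hφb : φ' (α + r) ≤ φ' (α + r / 2) * B := by nlinarith
    have hfr : φ' (α + r) * r / (α + r) ≤ 2 * B * (φ' (α + r / 2) * (r / 2) / (α + r / 2)) := by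
      have step1 : φ' (α + r) * r / (α + r) ≤ φ' (α + r / 2) * B * r / (α + r) := by
        gcongr
      have step2 : φ' (α + r / 2) * B * r / (α + r) ≤ φ' (α + r / 2) * B * r / (α + r / 2) := by
        gcongr
      have step3 : φ' (α + r / 2) * B * r / (α + r / 2)
          = 2 * B * (φ' (α + r / 2) * (r / 2) / (α + r / 2)) := by ring
      linarith
    have hl := hlow α hα r hr
    have hfnn := hf_nonneg α hα (r / 2) (by linarith)
    nlinarith [mul_le_mul_of_nonneg_right hfr hr.le]
  -- growth : M^c f(t) ≤ f(M t)
  have hF : ∀ α : ℝ, 0 ≤ α → ∀ M : ℝ, 1 ≤ M → ∀ t : ℝ, 0 < t →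
      M ^ c * (φ' (α + t) * t / (α + t)) ≤ φ' (α + M * t) * (M * t) / (α + M * t) := by
    intro α hα M hM t ht
    have hM0 : (0:ℝ) < M := lt_of_lt_of_le one_pos hM
    have ha : 0 < α + t := by linarith
    have hab : α + t ≤ α + M * t := by nlinarith
    have hb : 0 < α + M * t := lt_of_lt_of_le ha hab
    set q : ℝ := (α + M * t) / (α + t) with hqdef
    have hq1 : 1 ≤ q := (one_le_div ha).2 hab
    have hqM : q ≤ M := by
      rw [hqdef, div_le_iff₀ ha]; nlinarith
    have hkey := phiShift_aux_qlem q M c hq1 hqM hc.le hc1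
    have H1 : φ' (α + t) * q ^ c ≤ φ' (α + M * t) := hgrow (α + t) (α + M * t) ha hab
    have hφa := hφ'nn (α + t) ha
    have hqc : (0:ℝ) ≤ q ^ c := Real.rpow_nonneg (by positivity) _
    have hMc : (0:ℝ) ≤ M ^ c := Real.rpow_nonneg hM0.le _
    have hbqa : α + M * t = q * (α + t) := by
      rw [hqdef, div_mul_cancel₀ _ ha.ne']
    have step1 : φ' (α + t) * q ^ c * (M * t) / (α + M * t)
        ≤ φ' (α + M * t) * (M * t) / (α + M * t) := by
      gcongr
    have step2 : M ^ c * (φ' (α + t) * t / (α + t))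
        ≤ φ' (α + t) * q ^ c * (M * t) / (α + M * t) := by
      have hq0 : (0:ℝ) < q := lt_of_lt_of_le one_pos hq1
      rw [hbqa, ← mul_div_assoc, div_le_div_iff₀ ha (mul_pos hq0 ha)]
      have hfac : (0:ℝ) ≤ φ' (α + t) * t * (α + t) :=
        mul_nonneg (mul_nonneg hφa ht.le) ha.le
      nlinarith [mul_le_mul_of_nonneg_left hkey hfac]
    linarith
  -- main proof
  intro δ hδ
  set M : ℝ := max 1 ((2 / δ) ^ (1 / c)) with hMdef
  have hM1 : (1:ℝ) ≤ M := le_max_left _ _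
  have hM0 : (0:ℝ) < M := lt_of_lt_of_le one_pos hM1
  have hMc : (0:ℝ) < M ^ c := Real.rpow_pos_of_pos hM0 _
  have hM2 : (2:ℝ) ≤ δ * M ^ c := by
    have honeM : (1:ℝ) ≤ M ^ c := Real.one_le_rpow hM1 hc.le
    rcases le_or_gt (2 / δ) 1 with h | h
    · have h2 : (2:ℝ) ≤ δ := by
        rw [div_le_one hδ] at h; exact h
      linarith [mul_le_mul_of_nonneg_left honeM hδ.le]
    · have h2 : (2 / δ) ^ (1 / c) ≤ M := le_max_right _ _
      have h3 : ((2 / δ) ^ (1 / c)) ^ c ≤ M ^ c :=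
        Real.rpow_le_rpow (Real.rpow_nonneg (by positivity) _) h2 hc.le
      rw [← Real.rpow_mul (by positivity : (0:ℝ) ≤ 2 / δ), one_div_mul_cancel hc.ne',
        Real.rpow_one] at h3
      rw [div_le_iff₀ hδ] at h3
      linarith
  refine ⟨8 * B * M, by positivity, ?_⟩
  intro α hα r hr s hs
  have hPr : 0 ≤ phiShift φ' α r := hPnn α hα r hr
  have hPs : 0 ≤ phiShift φ' α s := hPnn α hα s hs
  rcases eq_or_lt_of_le hr with rfl | hr'
  · simp only [mul_zero, zero_div, zero_mul]
    have := mul_nonneg (by positivity : (0:ℝ) ≤ 8 * B * M) hPr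
    linarith [mul_nonneg hδ.le hPs]
  rcases le_or_gt s (2 * M * r) with hcase | hcase
  · -- small s
    have hfr : 0 ≤ φ' (α + r) * r / (α + r) := hf_nonneg α hα r hr'.le
    have b1 : (φ' (α + r) * r / (α + r)) * s ≤ (φ' (α + r) * r / (α + r)) * (2 * M * r) :=
      mul_le_mul_of_nonneg_left hcase hfr
    have b2 := hE α hα r hr'
    have b3 := mul_le_mul_of_nonneg_left b2 (by positivity : (0:ℝ) ≤ 2 * M)
    linarith [mul_nonneg hδ.le hPs]
  · -- large s
    have hs0 : 0 < s := by
      have h2Mr : 0 ≤ 2 * M * r := by positivity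
      linarith
    set t : ℝ := s / (2 * M) with htdef
    have ht0 : 0 < t := by positivity
    have hrt : r ≤ t := by
      rw [htdef, le_div_iff₀ (show (0:ℝ) < 2 * M by positivity)]
      linarith [hcase]
    have hMt : M * t = s / 2 := by
      rw [htdef, mul_div_assoc']
      rw [show (2:ℝ) * M = M * 2 by ring, show M * s = s * M by ring,
        mul_comm M 2]
      rw [mul_div_mul_right _ _ hM0.ne']
    have h1 : φ' (α + r) * r / (α + r) ≤ φ' (α + t) * t / (α + t) :=
      hf_mono α hα (Set.mem_Ici.2 hr) (Set.mem_Ici.2 ht0.le) hrt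
    have h2 := hF α hα M hM1 t ht0
    rw [hMt] at h2
    have h3 := hlow α hα s hs0
    have hft : 0 ≤ φ' (α + t) * t / (α + t) := hf_nonneg α hα t ht0.le
    have a1 : M ^ c * ((φ' (α + t) * t / (α + t)) * s)
        ≤ (φ' (α + s / 2) * (s / 2) / (α + s / 2)) * s := by
      linarith [mul_le_mul_of_nonneg_right h2 hs0.le]
    have a2 : (φ' (α + s / 2) * (s / 2) / (α + s / 2)) * s ≤ 2 * phiShift φ' α s := by
      linarith [h3]
    have a3 : 2 * phiShift φ' α s ≤ δ * M ^ c * phiShift φ' α s := by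
      linarith [mul_le_mul_of_nonneg_right hM2 hPs]
    have k2 : (φ' (α + t) * t / (α + t)) * s ≤ δ * phiShift φ' α s := by
      have k1 : M ^ c * ((φ' (α + t) * t / (α + t)) * s)
          ≤ M ^ c * (δ * phiShift φ' α s) := by linarith
      exact le_of_mul_le_mul_left k1 hMc
    have hfin : (φ' (α + r) * r / (α + r)) * s ≤ (φ' (α + t) * t / (α + t)) * s :=
      mul_le_mul_of_nonneg_right h1 hs
    linarith [mul_nonneg (by positivity : (0:ℝ) ≤ 8 * B * M) hPr]
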